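/- arXiv:2312.09485 — 2 statements merged into one kernel-verified Lean document; each statement's English description precedes it below -/
import Mathlib

section
/- Generating function identity (formal power series version of Theorem 2.5 with Y = 1): over ℝ[[t]] (with x, λ, m as parameters, m a positive integer), let e_λ(t) = Σ_{n≥0} (1)_{n,λ} t^n/n! and let W_{m,λ}(n,k) be defined by the formal power series identity e_λ(t)·(1/k!)((e_λ^m(t)−1)/m)^k = Σ_{n≥k} W_{m,λ}(n,k) t^n/n!, where e_λ^m(t) = Σ_{n≥0}(m)_{n,λ} t^n/n!. Then Σ_{n≥0} (Σ_{k=0}^{n} W_{m,λ}(n,k) x^k) t^n/n! = e_λ(t) · exp(x(e_λ^m(t)−1)/m) as formal power series in t. -/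
/-- The degenerate falling factorial `(x)_{n,λ} = x(x-λ)⋯(x-(n-1)λ)`, with `(x)_{0,λ} = 1`. -/
def degFall {R : Type*} [CommRing R] (x lam : R) (n : ℕ) : R :=
  ∏ i ∈ Finset.range n, (x - (i : R) * lam)

/-- The degenerate exponential `e_λ^a(t) = Σ_{n≥0} (a)_{n,λ} tⁿ/n!` as a formal power series. -/
noncomputable def degExpPS (R : Type*) [CommRing R] [Algebra ℚ R] (a lam : R) : PowerSeries R :=
  PowerSeries.mk fun n => ((n.factorial : ℚ)⁻¹) • degFall a lam n

/-- The formal exponential `exp f = Σ_{k≥0} fᵏ/k!` of a power series `f` with zero constant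
term (coefficientwise, only `k ≤ n` contributes to the `n`-th coefficient). -/
noncomputable def expPS (R : Type*) [CommRing R] [Algebra ℚ R] (f : PowerSeries R) :
    PowerSeries R :=
  PowerSeries.mk fun n =>
    ∑ k ∈ Finset.range (n + 1), ((k.factorial : ℚ)⁻¹) • PowerSeries.coeff n (f ^ k)

/-- Generating function of the degenerate Dowling polynomials: if the `W_{m,λ}(n,k)` are
defined by `e_λ(t)·(1/k!)((e_λ^m(t)−1)/m)ᵏ = Σ_{n≥k} W_{m,λ}(n,k) tⁿ/n!`, then
`Σ_{n≥0} (Σ_{k=0}^n W_{m,λ}(n,k) xᵏ) tⁿ/n! = e_λ(t)·exp(x(e_λ^m(t)−1)/m)`. -/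
theorem degDowling_generating_function (R : Type*) [CommRing R] [Algebra ℚ R]
    (x lam : R) (m : ℕ) (hm : 0 < m) (W : ℕ → ℕ → R)
    (hW : ∀ k : ℕ,
      ((k.factorial : ℚ)⁻¹) •
          (degExpPS R 1 lam * (((m : ℚ)⁻¹) • (degExpPS R (m : R) lam - 1)) ^ k) =
        PowerSeries.mk fun n => if k ≤ n then ((n.factorial : ℚ)⁻¹) • W n k else 0) :
    (PowerSeries.mk fun n =>
        ((n.factorial : ℚ)⁻¹) • ∑ k ∈ Finset.range (n + 1), W n k * x ^ k) =
      degExpPS R 1 lam *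
        expPS R (PowerSeries.C x * (((m : ℚ)⁻¹) • (degExpPS R (m : R) lam - 1))) := by
  classical
  set e := degExpPS R 1 lam with he
  set g := ((m : ℚ)⁻¹) • (degExpPS R (m : R) lam - 1) with hgdef
  -- g has zero constant term
  have hg0 : PowerSeries.constantCoeff g = 0 := by
    have : PowerSeries.coeff 0 (degExpPS R (m : R) lam) = 1 := by
      simp [degExpPS, degFall]
    simp [hgdef, ← PowerSeries.coeff_zero_eq_constantCoeff, this]
  -- coefficients of g^k below k vanish
  have hgk : ∀ q k : ℕ, q < k → PowerSeries.coeff q (g ^ k) = 0 := by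
    intro q k hqk
    have hdvd : (PowerSeries.X : PowerSeries R) ^ k ∣ g ^ k :=
      pow_dvd_pow_of_dvd (PowerSeries.X_dvd_iff.mpr hg0) k
    exact (PowerSeries.X_pow_dvd_iff.mp hdvd) q hqk
  ext n
  rw [PowerSeries.coeff_mk, PowerSeries.coeff_mul]
  -- expand coeff of expPS
  have step1 : ∀ p ∈ Finset.HasAntidiagonal.antidiagonal n,
      PowerSeries.coeff p.1 e *
        PowerSeries.coeff p.2 (expPS R (PowerSeries.C x * g)) =
      ∑ k ∈ Finset.range (n + 1), ((k.factorial : ℚ)⁻¹) •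
        (PowerSeries.coeff p.1 e * (x ^ k * PowerSeries.coeff p.2 (g ^ k))) := by
    intro p hp
    have hp2 : p.2 ≤ n := by
      have := Finset.HasAntidiagonal.antidiagonal.snd_le hp
      omega
    rw [expPS, PowerSeries.coeff_mk]
    rw [Finset.sum_subset (Finset.range_subset_range.mpr (by omega : p.2 + 1 ≤ n + 1))]
    · rw [Finset.mul_sum]
      refine Finset.sum_congr rfl fun k _ => ?_
      rw [mul_pow, ← map_pow, PowerSeries.coeff_C_mul]
      rw [mul_smul_comm]
    · intro k _ hk
      have hlt : p.2 < k := by simp at hk; omega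
      rw [mul_pow, ← map_pow, PowerSeries.coeff_C_mul, hgk p.2 k hlt,
        mul_zero, smul_zero]
  rw [Finset.sum_congr rfl step1, Finset.sum_comm]
  -- now inner sum over antidiagonal gives coeff of e * g^k
  have step2 : ∀ k ∈ Finset.range (n + 1),
      (∑ p ∈ Finset.HasAntidiagonal.antidiagonal n, ((k.factorial : ℚ)⁻¹) •
        (PowerSeries.coeff p.1 e * (x ^ k * PowerSeries.coeff p.2 (g ^ k)))) =
      ((n.factorial : ℚ)⁻¹) • (W n k * x ^ k) := by
    intro k hk
    have hkn : k ≤ n := by simpa [Nat.lt_succ_iff] using hk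
    have hcoeff := congrArg (PowerSeries.coeff n) (hW k)
    rw [PowerSeries.coeff_mk] at hcoeff
    simp only [if_pos hkn] at hcoeff
    have hcoeff' : ((k.factorial : ℚ)⁻¹) • PowerSeries.coeff n (e * g ^ k) =
        ((n.factorial : ℚ)⁻¹) • W n k := by
      rw [← hcoeff]; rfl
    calc (∑ p ∈ Finset.HasAntidiagonal.antidiagonal n, ((k.factorial : ℚ)⁻¹) •
        (PowerSeries.coeff p.1 e * (x ^ k * PowerSeries.coeff p.2 (g ^ k))))
        = x ^ k * (((k.factorial : ℚ)⁻¹) • PowerSeries.coeff n (e * g ^ k)) := by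
          rw [PowerSeries.coeff_mul, Finset.smul_sum, Finset.mul_sum]
          refine Finset.sum_congr rfl fun p _ => ?_
          rw [mul_smul_comm]
          ring_nf
      _ = ((n.factorial : ℚ)⁻¹) • (W n k * x ^ k) := by
          rw [hcoeff', mul_smul_comm, mul_comm]
  rw [Finset.sum_congr rfl step2, ← Finset.smul_sum]
end

section
/- Formal power series r-generating function (Theorem 2.16 with Y = 1): over a commutative ℚ-algebra with parameters x, λ and positive integers m, r, define e_λ^r(t) = Σ_{n≥0} (r)_{n,λ} t^n/n! and W^{(r)}_{m,λ}(n,k) by e_λ^r(t)·(1/k!)((e_λ^m(t)−1)/m)^k = Σ_{n≥k} W^{(r)}_{m,λ}(n,k) t^n/n!. Then Σ_{n≥0} (Σ_{k=0}^{n} W^{(r)}_{m,λ}(n,k) x^k) t^n/n! = e_λ^r(t) · exp(x(e_λ^m(t)−1)/m) as formal power series in t. -/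
/-- Generating function of the degenerate r-Dowling polynomials: if `W^{(r)}_{m,λ}(n,k)` are
defined by `e_λ^r(t)·(1/k!)((e_λ^m(t)−1)/m)ᵏ = Σ_{n≥k} W^{(r)}_{m,λ}(n,k) tⁿ/n!`, then
`Σ_{n≥0} (Σ_{k=0}^n W^{(r)}_{m,λ}(n,k) xᵏ) tⁿ/n! = e_λ^r(t)·exp(x(e_λ^m(t)−1)/m)`. -/
theorem degRDowling_generating_function (R : Type*) [CommRing R] [Algebra ℚ R]
    (x lam : R) (m r : ℕ) (hm : 0 < m) (hr : 0 < r) (W : ℕ → ℕ → R)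
    (hW : ∀ k : ℕ,
      ((k.factorial : ℚ)⁻¹) •
          (degExpPS R (r : R) lam * (((m : ℚ)⁻¹) • (degExpPS R (m : R) lam - 1)) ^ k) =
        PowerSeries.mk fun n => if k ≤ n then ((n.factorial : ℚ)⁻¹) • W n k else 0) :
    (PowerSeries.mk fun n =>
        ((n.factorial : ℚ)⁻¹) • ∑ k ∈ Finset.range (n + 1), W n k * x ^ k) =
      degExpPS R (r : R) lam *
        expPS R (PowerSeries.C x * (((m : ℚ)⁻¹) • (degExpPS R (m : R) lam - 1))) := by
  set e : PowerSeries R := degExpPS R (r : R) lam with he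
  set g : PowerSeries R := ((m : ℚ)⁻¹) • (degExpPS R (m : R) lam - 1) with hg
  have hg0 : PowerSeries.constantCoeff g = 0 := by
    have : PowerSeries.coeff 0 g = 0 := by
      rw [hg, PowerSeries.coeff_smul, map_sub]
      simp [degExpPS, degFall]
    rwa [PowerSeries.coeff_zero_eq_constantCoeff] at this
  have hgk : ∀ k n : ℕ, n < k → PowerSeries.coeff n (g ^ k) = 0 := by
    intro k n hn
    have hdvd : (PowerSeries.X : PowerSeries R) ^ k ∣ g ^ k :=
      pow_dvd_pow_of_dvd (PowerSeries.X_dvd_iff.mpr hg0) k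
    exact (PowerSeries.X_pow_dvd_iff.mp hdvd) n hn
  have hfk : ∀ k n : ℕ, PowerSeries.coeff n ((PowerSeries.C x * g) ^ k) =
      x ^ k * PowerSeries.coeff n (g ^ k) := by
    intro k n
    rw [mul_pow, ← map_pow, PowerSeries.coeff_C_mul]
  ext n
  rw [PowerSeries.coeff_mk, PowerSeries.coeff_mul]
  have step1 : ∀ p ∈ Finset.HasAntidiagonal.antidiagonal n,
      PowerSeries.coeff p.1 e *
          PowerSeries.coeff p.2 (expPS R (PowerSeries.C x * g)) =
        ∑ k ∈ Finset.range (n + 1),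
          PowerSeries.coeff p.1 e *
            (((k.factorial : ℚ)⁻¹) •
              PowerSeries.coeff p.2 ((PowerSeries.C x * g) ^ k)) := by
    intro p hp
    have hp2 : p.2 ≤ n := by
      have := Finset.HasAntidiagonal.antidiagonal.snd_le hp
      omega
    rw [expPS, PowerSeries.coeff_mk, Finset.mul_sum]
    apply Finset.sum_subset
    · intro k hk
      simp only [Finset.mem_range] at hk ⊢
      omega
    · intro k _ hk
      simp only [Finset.mem_range, not_lt] at hk
      rw [hfk, hgk k p.2 (by omega)]
      simp
  rw [Finset.sum_congr rfl step1, Finset.sum_comm]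
  have step2 : ∀ k ∈ Finset.range (n + 1),
      (∑ p ∈ Finset.HasAntidiagonal.antidiagonal n,
        PowerSeries.coeff p.1 e *
          (((k.factorial : ℚ)⁻¹) •
            PowerSeries.coeff p.2 ((PowerSeries.C x * g) ^ k))) =
      x ^ k * (((n.factorial : ℚ)⁻¹) • W n k) := by
    intro k hk
    have hkn : k ≤ n := by simpa [Nat.lt_succ_iff] using hk
    have hcoef : PowerSeries.coeff n (((k.factorial : ℚ)⁻¹) • (e * g ^ k)) =
        ((n.factorial : ℚ)⁻¹) • W n k := by
      rw [hW k, PowerSeries.coeff_mk, if_pos hkn]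
    rw [← hcoef, PowerSeries.coeff_smul, PowerSeries.coeff_mul, Finset.smul_sum,
      Finset.mul_sum]
    apply Finset.sum_congr rfl
    intro p _
    rw [hfk, mul_smul_comm, mul_smul_comm]
    congr 1
    ring
  rw [Finset.sum_congr rfl step2, Finset.smul_sum]
  apply Finset.sum_congr rfl
  intro k _
  rw [mul_comm (W n k), mul_smul_comm]
end
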